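/- arXiv:0706.0431 — 2 statements merged into one kernel-verified Lean document; each statement's English description precedes it below -/
import Mathlib

section
/- Let ℓ ≥ 1 and β ≥ 1 be integers with constants c_{ℓ−1}, …, c_0 defined by the stated recursion. Assume every c_k is an integer and c_{ℓ−1} ≥ c_{ℓ−2} ≥ ⋯ ≥ c_0. Then for every q ∈ ℕ with β·q + c_0 ≥ 0, rep_ℓ(β^ℓ · val_ℓ(0,…,0,q)) = (c_{ℓ−1}−c_{ℓ−2}, c_{ℓ−2}−c_{ℓ−3}, …, c_1−c_0, β·q + c_0); in particular, the language {word(rep_ℓ(β^ℓ · val_ℓ(0,…,0,q))) : q ∈ ℕ} is regular. -/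
/-- Unsigned Stirling numbers of the first kind: `x(x+1)⋯(x+i−1) = Σ_j S₁(i,j) x^j`,
with `S₁(i,j) = 0` for `j = 0` (or `i < j`). -/
noncomputable def S1 (i j : ℕ) : ℕ := if j = 0 then 0 else (ascPochhammer ℕ i).coeff j

/-- `valB ℓ n = Σ_{i=1}^{ℓ} C(n_i + ⋯ + n_ℓ + ℓ − i, ℓ − i + 1)` (0-based indexing). -/
def valB (ℓ : ℕ) (n : Fin ℓ → ℕ) : ℕ :=
  ∑ i : Fin ℓ,
    Nat.choose ((∑ j ∈ Finset.univ.filter (fun j => i ≤ j), n j) + (ℓ - 1 - (i : ℕ)))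
      (ℓ - (i : ℕ))

/-- `repB ℓ` is the inverse of the bijection `valB ℓ`. -/
noncomputable def repB (ℓ : ℕ) : ℕ → (Fin ℓ → ℕ) := Function.invFun (valB ℓ)

/-- The word `a_1^{n_1} a_2^{n_2} ⋯ a_ℓ^{n_ℓ}` over the alphabet `Fin ℓ`. -/
def wordB (ℓ : ℕ) (n : Fin ℓ → ℕ) : List (Fin ℓ) :=
  (List.ofFn (fun i : Fin ℓ => List.replicate (n i) i)).flatten

/-- The tuple `(0, …, 0, q) ∈ ℕ^ℓ`, i.e. the word `a_ℓ^q`. -/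
def lastTuple (ℓ q : ℕ) : Fin ℓ → ℕ := fun i => if (i : ℕ) = ℓ - 1 then q else 0


open Finset Polynomial



open Finset Polynomial

lemma S1_zero_right (i : ℕ) : S1 i 0 = 0 := by simp [S1]

lemma S1_eq_zero_of_lt {i j : ℕ} (h : i < j) : S1 i j = 0 := by
  have : (ascPochhammer ℕ i).natDegree < j := by rwa [ascPochhammer_natDegree (S := ℕ)]
  have hj : j ≠ 0 := by omega
  simp [S1, hj, Polynomial.coeff_eq_zero_of_natDegree_lt this]

lemma S1_self {i : ℕ} (hi : 1 ≤ i) : S1 i i = 1 := by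
  have h1 : (ascPochhammer ℕ i).Monic := monic_ascPochhammer ℕ i
  have h2 : (ascPochhammer ℕ i).natDegree = i := ascPochhammer_natDegree (S := ℕ) i
  have hi0 : i ≠ 0 := by omega
  simpa [S1, hi0, h2] using h1.coeff_natDegree

lemma S1_zero_left {j : ℕ} : S1 0 j = 0 := by
  rcases Nat.eq_zero_or_pos j with h | h
  · simp [h, S1_zero_right]
  · exact S1_eq_zero_of_lt h

lemma coeff_asc_eq_S1 {r k : ℕ} (hr : 1 ≤ r) : (ascPochhammer ℕ r).coeff k = S1 r k := by
  rcases Nat.eq_zero_or_pos k with h | h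
  · subst h
    rw [S1_zero_right, Polynomial.coeff_zero_eq_eval_zero, ascPochhammer_eval_zero]
    simp [Nat.pos_iff_ne_zero.mp hr]
  · simp [S1, Nat.pos_iff_ne_zero.mp h]

lemma asc_eval_eq_sum {r : ℕ} (hr : 1 ≤ r) (y : ℚ) :
    (ascPochhammer ℚ r).eval y = ∑ k ∈ range (r + 1), (S1 r k : ℚ) * y ^ k := by
  have hmap : ascPochhammer ℚ r = (ascPochhammer ℕ r).map (Nat.castRingHom ℚ) := by
    rw [ascPochhammer_map]
  have hdeg : (ascPochhammer ℚ r).natDegree < r + 1 := by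
    rw [ascPochhammer_natDegree (S := ℚ)]; omega
  rw [Polynomial.eval_eq_sum_range' hdeg]
  refine Finset.sum_congr rfl fun k _ => ?_
  rw [hmap, Polynomial.coeff_map, coeff_asc_eq_S1 hr]
  simp

lemma cast_choose_asc (m r : ℕ) :
    ((m + r - 1).choose r : ℚ) * (Nat.factorial r : ℚ) = (ascPochhammer ℚ r).eval (m : ℚ) := by
  have h := Nat.ascFactorial_eq_factorial_mul_choose' m r
  have h2 : (((ascPochhammer ℕ r).eval m : ℕ) : ℚ) = (ascPochhammer ℚ r).eval (m : ℚ) :=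
    ascPochhammer_eval_cast (S := ℚ) r m
  rw [← h2, ascPochhammer_nat_eq_ascFactorial, h]
  push_cast; ring



/-- partial sums from natural index t -/
def psum (ℓ : ℕ) (n : Fin ℓ → ℕ) (t : ℕ) : ℕ :=
  ∑ j : Fin ℓ, if t ≤ (j : ℕ) then n j else 0

lemma psum_filter (ℓ : ℕ) (n : Fin ℓ → ℕ) (i : Fin ℓ) :
    ∑ j ∈ Finset.univ.filter (fun j => i ≤ j), n j = psum ℓ n (i : ℕ) := by
  rw [psum, Finset.sum_filter]
  apply Finset.sum_congr rfl
  intro j _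
  congr 1

lemma psum_succ (ℓ : ℕ) (n : Fin ℓ → ℕ) (t : ℕ) (ht : t < ℓ) :
    psum ℓ n t = n ⟨t, ht⟩ + psum ℓ n (t + 1) := by
  rw [psum, psum, ← Finset.sum_filter, ← Finset.sum_filter]
  rw [show (Finset.univ.filter (fun j : Fin ℓ => t ≤ (j : ℕ)))
      = insert ⟨t, ht⟩ (Finset.univ.filter (fun j : Fin ℓ => t + 1 ≤ (j : ℕ))) from by
    ext j; simp [Fin.ext_iff]; omega]
  rw [Finset.sum_insert (by simp)]

lemma psum_ge (ℓ : ℕ) (n : Fin ℓ → ℕ) (t : ℕ) (ht : ℓ ≤ t) : psum ℓ n t = 0 := by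
  apply Finset.sum_eq_zero
  intro j _
  rw [if_neg (by omega)]

lemma psum_antitone (ℓ : ℕ) (n : Fin ℓ → ℕ) {s t : ℕ} (h : s ≤ t) :
    psum ℓ n t ≤ psum ℓ n s := by
  apply Finset.sum_le_sum
  intro j _
  by_cases h2 : t ≤ (j : ℕ)
  · rw [if_pos h2, if_pos (by omega)]
  · rw [if_neg h2]; exact Nat.zero_le _

/-- the b-sequence of a tuple -/
def bseq (ℓ : ℕ) (n : Fin ℓ → ℕ) (k : ℕ) : ℕ := psum ℓ n (ℓ - 1 - k) + k

lemma bseq_strictMono (ℓ : ℕ) (n : Fin ℓ → ℕ) : StrictMono (bseq ℓ n) := by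
  apply strictMono_nat_of_lt_succ
  intro k
  have := psum_antitone ℓ n (show ℓ - 1 - (k+1) ≤ ℓ - 1 - k by omega)
  unfold bseq
  omega

lemma valB_eq_bseq (ℓ : ℕ) (n : Fin ℓ → ℕ) :
    valB ℓ n = ∑ k ∈ range ℓ, Nat.choose (bseq ℓ n k) (k + 1) := by
  set gnat : ℕ → ℕ := fun t => Nat.choose (psum ℓ n t + (ℓ - 1 - t)) (ℓ - t) with hgnat
  calc valB ℓ n
      = ∑ i : Fin ℓ, gnat (i : ℕ) := by
        apply Finset.sum_congr rfl
        intro i _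
        rw [psum_filter ℓ n i]
    _ = ∑ i : Fin ℓ, gnat ((Fin.revPerm i : Fin ℓ) : ℕ) :=
        (Equiv.sum_comp Fin.revPerm (fun i : Fin ℓ => gnat (i : ℕ))).symm
    _ = ∑ i : Fin ℓ, gnat (ℓ - 1 - (i : ℕ)) := by
        apply Finset.sum_congr rfl
        intro i _
        congr 1
        rw [Fin.revPerm_apply, Fin.val_rev]
        omega
    _ = ∑ k ∈ range ℓ, gnat (ℓ - 1 - k) :=
        Fin.sum_univ_eq_sum_range (fun k => gnat (ℓ - 1 - k)) ℓ
    _ = ∑ k ∈ range ℓ, Nat.choose (bseq ℓ n k) (k + 1) := by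
        apply Finset.sum_congr rfl
        intro k hk
        have hkl : k < ℓ := by simpa using hk
        have e1 : ℓ - 1 - (ℓ - 1 - k) = k := by omega
        have e2 : ℓ - (ℓ - 1 - k) = k + 1 := by omega
        show (psum ℓ n (ℓ - 1 - k) + (ℓ - 1 - (ℓ - 1 - k))).choose (ℓ - (ℓ - 1 - k))
          = (psum ℓ n (ℓ - 1 - k) + k).choose (k + 1)
        rw [e1, e2]

/-- key identity -/
lemma sum_choose_id (m : ℕ) : ∀ B : ℕ, m ≤ B + 1 →
    ∑ k ∈ range m, Nat.choose (B - (m - 1 - k)) (k+1) = Nat.choose (B+1) m - 1 := by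
  induction m with
  | zero => intro B _; simp
  | succ m ih =>
    intro B hB
    rcases Nat.eq_zero_or_pos B with rfl | hBpos
    · have : m = 0 := by omega
      subst this
      simp
    rw [Finset.sum_range_succ]
    have hsub : ∀ k ∈ range m, Nat.choose (B - (m + 1 - 1 - k)) (k+1)
        = Nat.choose ((B-1) - (m - 1 - k)) (k+1) := by
      intro k hk
      have : k < m := by simpa using hk
      congr 1
      omega
    rw [Finset.sum_congr rfl hsub, ih (B-1) (by omega)]
    have h1 : Nat.choose (B - (m + 1 - 1 - m)) (m+1) = Nat.choose B (m+1) := by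
      congr 1; omega
    rw [h1]
    have h2 : Nat.choose (B-1+1) m = Nat.choose B m := by congr 1; omega
    rw [h2]
    have hpascal : Nat.choose (B+1) (m+1) = Nat.choose B m + Nat.choose B (m+1) :=
      Nat.choose_succ_succ B m
    have hpos : 0 < Nat.choose B m := Nat.choose_pos (by omega)
    omega

lemma strictMono_add_le {b : ℕ → ℕ} (hb : StrictMono b) (k d : ℕ) : b k + d ≤ b (k + d) := by
  induction d with
  | zero => simp
  | succ d ih =>
    have := hb (show k + d < k + d + 1 by omega)
    show b k + (d + 1) ≤ b (k + d + 1)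
    omega

lemma sum_lt_choose (m : ℕ) (hm : 1 ≤ m) (b : ℕ → ℕ) (hb : StrictMono b) :
    ∑ k ∈ range m, Nat.choose (b k) (k+1) < Nat.choose (b (m-1) + 1) m := by
  have hBk : ∀ k ∈ range m, b k ≤ b (m-1) - (m - 1 - k) := by
    intro k hk
    have hkm : k < m := by simpa using hk
    have := strictMono_add_le hb k (m - 1 - k)
    have h2 : k + (m - 1 - k) = m - 1 := by omega
    rw [h2] at this
    omega
  have hB : m ≤ b (m-1) + 1 := by
    have := strictMono_add_le hb 0 (m-1)
    simp at this
    omega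
  calc ∑ k ∈ range m, Nat.choose (b k) (k+1)
      ≤ ∑ k ∈ range m, Nat.choose (b (m-1) - (m - 1 - k)) (k+1) := by
        apply Finset.sum_le_sum
        intro k hk
        exact Nat.choose_le_choose _ (hBk k hk)
    _ = Nat.choose (b (m-1) + 1) m - 1 := sum_choose_id m (b (m-1)) hB
    _ < Nat.choose (b (m-1) + 1) m := by
        have : 1 ≤ Nat.choose (b (m-1) + 1) m := Nat.choose_pos (by omega)
        omega

lemma bval_inj (m : ℕ) : ∀ b b' : ℕ → ℕ, StrictMono b → StrictMono b' →
    (∑ k ∈ range m, Nat.choose (b k) (k+1)) = (∑ k ∈ range m, Nat.choose (b' k) (k+1)) →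
    ∀ k < m, b k = b' k := by
  induction m with
  | zero => intro _ _ _ _ _ k hk; omega
  | succ m ih =>
    intro b b' hb hb' hsum
    have htop : b m = b' m := by
      by_contra hne
      rcases Nat.lt_or_ge (b m) (b' m) with h | h
      · have h1 : ∑ k ∈ range (m+1), Nat.choose (b k) (k+1) < Nat.choose (b m + 1) (m+1) := by
          have := sum_lt_choose (m+1) (by omega) b hb
          simpa using this
        have h2 : Nat.choose (b m + 1) (m+1) ≤ Nat.choose (b' m) (m+1) :=
          Nat.choose_le_choose _ (by omega)
        have h3 : Nat.choose (b' m) (m+1) ≤ ∑ k ∈ range (m+1), Nat.choose (b' k) (k+1) := by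
          rw [Finset.sum_range_succ]
          omega
        omega
      · have hlt : b' m < b m := by omega
        have h1 : ∑ k ∈ range (m+1), Nat.choose (b' k) (k+1) < Nat.choose (b' m + 1) (m+1) := by
          have := sum_lt_choose (m+1) (by omega) b' hb'
          simpa using this
        have h2 : Nat.choose (b' m + 1) (m+1) ≤ Nat.choose (b m) (m+1) :=
          Nat.choose_le_choose _ (by omega)
        have h3 : Nat.choose (b m) (m+1) ≤ ∑ k ∈ range (m+1), Nat.choose (b k) (k+1) := by
          rw [Finset.sum_range_succ]
          omega
        omega
    have hrest : ∑ k ∈ range m, Nat.choose (b k) (k+1) = ∑ k ∈ range m, Nat.choose (b' k) (k+1) := by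
      rw [Finset.sum_range_succ, Finset.sum_range_succ, htop] at hsum
      omega
    intro k hk
    rcases Nat.lt_or_ge k m with h | h
    · exact ih b b' hb hb' hrest k h
    · have : k = m := by omega
      subst this
      exact htop

lemma valB_injective (ℓ : ℕ) : Function.Injective (valB ℓ) := by
  intro n n' h
  rw [valB_eq_bseq, valB_eq_bseq] at h
  have hb := bval_inj ℓ _ _ (bseq_strictMono ℓ n) (bseq_strictMono ℓ n') h
  have hps : ∀ t, t < ℓ → psum ℓ n t = psum ℓ n' t := by
    intro t ht
    have := hb (ℓ - 1 - t) (by omega)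
    unfold bseq at this
    have h2 : ℓ - 1 - (ℓ - 1 - t) = t := by omega
    rw [h2] at this
    omega
  funext j
  have hj : (j : ℕ) < ℓ := j.isLt
  have h1 : psum ℓ n (j : ℕ) = psum ℓ n' (j : ℕ) := hps _ hj
  have h2 : psum ℓ n ((j : ℕ) + 1) = psum ℓ n' ((j : ℕ) + 1) := by
    rcases Nat.lt_or_ge ((j : ℕ) + 1) ℓ with h | h
    · exact hps _ h
    · rw [psum_ge _ _ _ h, psum_ge _ _ _ h]
  have e1 := psum_succ ℓ n (j : ℕ) hj
  have e2 := psum_succ ℓ n' (j : ℕ) hj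
  have : n ⟨(j:ℕ), hj⟩ = n' ⟨(j:ℕ), hj⟩ := by omega
  simpa using this

lemma A_eq (ℓ β k : ℕ) (c : ℕ → ℚ)
    (hc : ∀ k < ℓ, c k =
      (Nat.factorial k : ℚ) * ((β : ℚ) ^ (ℓ - k) - 1) *
          (∑ i ∈ Finset.Icc k ℓ, (S1 i k : ℚ) / (Nat.factorial i : ℚ)) -
        ∑ i ∈ Finset.Icc (k + 2) ℓ, ∑ j ∈ Finset.Icc (k + 1) i,
          ((S1 i j : ℚ) * (Nat.factorial j : ℚ)) /
              ((Nat.factorial i : ℚ) * (Nat.factorial (j - k) : ℚ)) *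
            (c (i - 1)) ^ (j - k))
    (hk : k ≤ ℓ) :
    ∑ r ∈ range (ℓ+1), ∑ j ∈ range (ℓ+1),
        (S1 r j : ℚ)/(Nat.factorial r : ℚ) * (j.choose k : ℚ) * (c (r-1))^(j-k)
      = (β:ℚ)^(ℓ-k) * ∑ r ∈ range (ℓ+1), (S1 r k : ℚ)/(Nat.factorial r : ℚ) := by
  set g : ℕ → ℕ → ℚ := fun r j =>
    (S1 r j : ℚ)/(Nat.factorial r : ℚ) * (j.choose k : ℚ) * (c (r-1))^(j-k) with hg
  set T : ℚ := ∑ r ∈ range (ℓ+1), (S1 r k : ℚ)/(Nat.factorial r : ℚ) with hT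
  -- inner split
  have hsplit : ∀ r ∈ range (ℓ+1), ∑ j ∈ range (ℓ+1), g r j
      = g r k + ∑ j ∈ Icc (k+1) ℓ, g r j := by
    intro r _
    have h1 : range (ℓ+1) = Icc 0 k ∪ Icc (k+1) ℓ := by
      ext x; simp; omega
    have hdisj : Disjoint (Icc 0 k) (Icc (k+1) ℓ) := by
      rw [Finset.disjoint_left]; intro x hx hx'; simp at hx hx'; omega
    rw [h1, Finset.sum_union hdisj]
    congr 1
    apply Finset.sum_eq_single_of_mem k (by simp)
    intro j hj hjk
    have : j < k := by simp at hj; omega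
    have : j.choose k = 0 := Nat.choose_eq_zero_of_lt this
    simp [hg, this]
  rw [Finset.sum_congr rfl hsplit, Finset.sum_add_distrib]
  have hTeq : ∑ r ∈ range (ℓ+1), g r k = T := by
    apply Finset.sum_congr rfl
    intro r _
    simp [hg]
  rw [hTeq]
  -- now the tail
  rcases eq_or_lt_of_le hk with rfl | hkl
  · have : ∀ r ∈ range (k+1), ∑ j ∈ Icc (k+1) k, g r j = 0 := by
      intro r _; rw [Finset.Icc_eq_empty (by omega)]; simp
    rw [Finset.sum_congr rfl this]
    simp
  -- k < ℓ
  have hrsplit : range (ℓ+1) = Icc 0 (k+1) ∪ Icc (k+2) ℓ := by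
    ext x; simp; omega
  have hdisj : Disjoint (Icc 0 (k+1)) (Icc (k+2) ℓ) := by
    rw [Finset.disjoint_left]; intro x hx hx'; simp at hx hx'; omega
  rw [hrsplit, Finset.sum_union hdisj]
  have hlow : ∑ r ∈ Icc 0 (k+1), ∑ j ∈ Icc (k+1) ℓ, g r j = c k / (Nat.factorial k : ℚ) := by
    rw [Finset.sum_eq_single_of_mem (k+1) (by simp)]
    · rw [Finset.sum_eq_single_of_mem (k+1) (by simp; omega)]
      · have h1 : S1 (k+1) (k+1) = 1 := S1_self (by omega)
        have h2 : (k+1).choose k = k+1 := Nat.choose_succ_self_right k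
        simp only [hg, h1, h2, Nat.add_sub_cancel, pow_one, Nat.cast_one]
        rw [Nat.factorial_succ]
        push_cast
        have := Nat.factorial_pos k
        field_simp
        ring_nf
        simp
      · intro j hj hjne
        have : k + 1 < j := by simp at hj; omega
        simp [hg, S1_eq_zero_of_lt this]
    · intro r hr hrne
      apply Finset.sum_eq_zero
      intro j hj
      have : r < j := by simp at hr hj; omega
      simp [hg, S1_eq_zero_of_lt this]
  rw [hlow]
  have hhigh : ∑ r ∈ Icc (k+2) ℓ, ∑ j ∈ Icc (k+1) ℓ, g r j
      = (1 / (Nat.factorial k : ℚ)) * ∑ i ∈ Finset.Icc (k + 2) ℓ, ∑ j ∈ Finset.Icc (k + 1) i,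
          ((S1 i j : ℚ) * (Nat.factorial j : ℚ)) /
              ((Nat.factorial i : ℚ) * (Nat.factorial (j - k) : ℚ)) * (c (i - 1)) ^ (j - k) := by
    rw [Finset.mul_sum]
    apply Finset.sum_congr rfl
    intro r hr
    have hrl : r ≤ ℓ := by simp at hr; omega
    rw [Finset.mul_sum]
    calc ∑ j ∈ Icc (k+1) ℓ, g r j
        = ∑ j ∈ Icc (k+1) r, g r j := by
          refine (Finset.sum_subset (Finset.Icc_subset_Icc_right hrl) ?_).symm
          intro j hj hj2
          have : r < j := by simp at hj hj2; omega
          simp [hg, S1_eq_zero_of_lt this]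
      _ = _ := by
          apply Finset.sum_congr rfl
          intro j hj
          have hkj : k ≤ j := by simp at hj; omega
          have hcast : (j.choose k : ℚ) = (Nat.factorial j : ℚ) /
              ((Nat.factorial k : ℚ) * (Nat.factorial (j-k) : ℚ)) := Nat.cast_choose ℚ hkj
          have h1 : (Nat.factorial k : ℚ) ≠ 0 := by exact_mod_cast (Nat.factorial_pos k).ne'
          have h2 : (Nat.factorial (j-k) : ℚ) ≠ 0 := by
            exact_mod_cast (Nat.factorial_pos (j-k)).ne'
          have h3 : (Nat.factorial r : ℚ) ≠ 0 := by exact_mod_cast (Nat.factorial_pos r).ne'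
          simp only [hg, hcast]
          field_simp
  rw [hhigh]
  -- use hc
  have hck := hc k hkl
  have hTT : ∑ i ∈ Finset.Icc k ℓ, (S1 i k : ℚ) / (Nat.factorial i : ℚ) = T := by
    rw [hT, show Finset.range (ℓ+1) = Icc 0 ℓ from by ext x; simp]
    refine Finset.sum_subset (Finset.Icc_subset_Icc_left (Nat.zero_le k)) ?_
    intro j hj hj2
    have : j < k := by simp at hj hj2; omega
    simp [S1_eq_zero_of_lt this]
  rw [hTT] at hck
  have hfk : (Nat.factorial k : ℚ) ≠ 0 := by
    exact_mod_cast (Nat.factorial_pos k).ne'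
  have : c k / (Nat.factorial k : ℚ) = ((β : ℚ) ^ (ℓ - k) - 1) * T
      - (1 / (Nat.factorial k : ℚ)) * ∑ i ∈ Finset.Icc (k + 2) ℓ, ∑ j ∈ Finset.Icc (k + 1) i,
          ((S1 i j : ℚ) * (Nat.factorial j : ℚ)) /
              ((Nat.factorial i : ℚ) * (Nat.factorial (j - k) : ℚ)) * (c (i - 1)) ^ (j - k) := by
    rw [hck]; field_simp
  rw [this]; ring

lemma main_identity (ℓ β : ℕ) (c : ℕ → ℚ)
    (hc : ∀ k < ℓ, c k =
      (Nat.factorial k : ℚ) * ((β : ℚ) ^ (ℓ - k) - 1) *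
          (∑ i ∈ Finset.Icc k ℓ, (S1 i k : ℚ) / (Nat.factorial i : ℚ)) -
        ∑ i ∈ Finset.Icc (k + 2) ℓ, ∑ j ∈ Finset.Icc (k + 1) i,
          ((S1 i j : ℚ) * (Nat.factorial j : ℚ)) /
              ((Nat.factorial i : ℚ) * (Nat.factorial (j - k) : ℚ)) *
            (c (i - 1)) ^ (j - k))
    (q : ℚ) :
    ∑ r ∈ Icc 1 ℓ, (ascPochhammer ℚ r).eval ((β:ℚ) * q + c (r-1)) / (Nat.factorial r : ℚ)
      = (β:ℚ)^ℓ * ∑ r ∈ Icc 1 ℓ, (ascPochhammer ℚ r).eval q / (Nat.factorial r : ℚ) := by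
  set f : ℕ → ℕ → ℕ → ℚ := fun r j k =>
    (S1 r j : ℚ)/(Nat.factorial r : ℚ) * (j.choose k : ℚ) * ((β:ℚ)*q)^k * (c (r-1))^(j-k)
    with hf
  have stepA : ∀ r ∈ Icc 1 ℓ,
      (ascPochhammer ℚ r).eval ((β:ℚ) * q + c (r-1)) / (Nat.factorial r : ℚ)
        = ∑ j ∈ range (ℓ+1), ∑ k ∈ range (ℓ+1), f r j k := by
    intro r hr
    simp only [Finset.mem_Icc] at hr
    rw [asc_eval_eq_sum hr.1, Finset.sum_div]
    rw [Finset.sum_subset (Finset.range_subset_range.mpr (by omega : r + 1 ≤ ℓ + 1))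
      (fun j _ hj2 => by
        have : r < j := by simp at hj2 ⊢; omega
        simp [S1_eq_zero_of_lt this])]
    apply Finset.sum_congr rfl
    intro j hj
    have hjl : j ≤ ℓ := by simp at hj; omega
    rw [add_pow]
    rw [Finset.sum_subset (Finset.range_subset_range.mpr (by omega : j + 1 ≤ ℓ + 1))
      (fun k _ hk2 => by
        have : j < k := by simp at hk2 ⊢; omega
        simp [Nat.choose_eq_zero_of_lt this])]
    rw [Finset.mul_sum, Finset.sum_div]
    apply Finset.sum_congr rfl
    intro k _
    simp only [hf]
    ring
  rw [Finset.sum_congr rfl stepA]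
  have h0 : ∑ r ∈ Icc 1 ℓ, ∑ j ∈ range (ℓ+1), ∑ k ∈ range (ℓ+1), f r j k
      = ∑ r ∈ range (ℓ+1), ∑ j ∈ range (ℓ+1), ∑ k ∈ range (ℓ+1), f r j k := by
    apply Finset.sum_subset (by intro x hx; simp at hx ⊢; omega)
    intro r hr hr2
    have : r = 0 := by simp at hr hr2; omega
    subst this
    apply Finset.sum_eq_zero; intro j _
    apply Finset.sum_eq_zero; intro k _
    simp [hf, S1_zero_left]
  rw [h0]
  have h1 : ∑ r ∈ range (ℓ+1), ∑ j ∈ range (ℓ+1), ∑ k ∈ range (ℓ+1), f r j k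
      = ∑ k ∈ range (ℓ+1), ∑ r ∈ range (ℓ+1), ∑ j ∈ range (ℓ+1), f r j k := by
    have hin : ∀ r ∈ range (ℓ+1), ∑ j ∈ range (ℓ+1), ∑ k ∈ range (ℓ+1), f r j k
        = ∑ k ∈ range (ℓ+1), ∑ j ∈ range (ℓ+1), f r j k := fun r _ => Finset.sum_comm
    rw [Finset.sum_congr rfl hin, Finset.sum_comm]
  rw [h1]
  have h2 : ∀ k ∈ range (ℓ+1), ∑ r ∈ range (ℓ+1), ∑ j ∈ range (ℓ+1), f r j k
      = (β:ℚ)^ℓ * q^k * ∑ r ∈ range (ℓ+1), (S1 r k : ℚ)/(Nat.factorial r : ℚ) := by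
    intro k hk
    have hkl : k ≤ ℓ := by simp at hk; omega
    have hfac : ∑ r ∈ range (ℓ+1), ∑ j ∈ range (ℓ+1), f r j k
        = ((β:ℚ)*q)^k * ∑ r ∈ range (ℓ+1), ∑ j ∈ range (ℓ+1),
            (S1 r j : ℚ)/(Nat.factorial r : ℚ) * (j.choose k : ℚ) * (c (r-1))^(j-k) := by
      rw [Finset.mul_sum]
      apply Finset.sum_congr rfl; intro r _
      rw [Finset.mul_sum]
      apply Finset.sum_congr rfl; intro j _
      simp only [hf]; ring
    rw [hfac, A_eq ℓ β k c hc hkl, mul_pow, ← mul_assoc]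
    have hbb : (β:ℚ)^k * (β:ℚ)^(ℓ-k) = (β:ℚ)^ℓ := by
      rw [← pow_add]; congr 1; omega
    rw [show ((β:ℚ)^k * q^k) * (β:ℚ)^(ℓ-k) = ((β:ℚ)^k * (β:ℚ)^(ℓ-k)) * q^k by ring, hbb]
  rw [Finset.sum_congr rfl h2]
  have h3 : ∑ k ∈ range (ℓ+1), (β:ℚ)^ℓ * q^k * ∑ r ∈ range (ℓ+1), (S1 r k : ℚ)/(Nat.factorial r : ℚ)
      = (β:ℚ)^ℓ * ∑ r ∈ range (ℓ+1), (∑ k ∈ range (ℓ+1), (S1 r k : ℚ) * q^k) / (Nat.factorial r : ℚ) := by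
    calc ∑ k ∈ range (ℓ+1), (β:ℚ)^ℓ * q^k * ∑ r ∈ range (ℓ+1), (S1 r k : ℚ)/(Nat.factorial r : ℚ)
        = ∑ k ∈ range (ℓ+1), ∑ r ∈ range (ℓ+1),
            (β:ℚ)^ℓ * ((S1 r k : ℚ) * q^k / (Nat.factorial r : ℚ)) := by
          apply Finset.sum_congr rfl; intro k _
          rw [Finset.mul_sum]
          apply Finset.sum_congr rfl; intro r _
          ring
      _ = ∑ r ∈ range (ℓ+1), ∑ k ∈ range (ℓ+1),
            (β:ℚ)^ℓ * ((S1 r k : ℚ) * q^k / (Nat.factorial r : ℚ)) := Finset.sum_comm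
      _ = _ := by
          rw [Finset.mul_sum]
          apply Finset.sum_congr rfl; intro r _
          rw [Finset.sum_div, Finset.mul_sum]
  rw [h3]
  congr 1
  have h4 : ∑ r ∈ range (ℓ+1), (∑ k ∈ range (ℓ+1), (S1 r k : ℚ) * q^k) / (Nat.factorial r : ℚ)
      = ∑ r ∈ Icc 1 ℓ, (∑ k ∈ range (ℓ+1), (S1 r k : ℚ) * q^k) / (Nat.factorial r : ℚ) := by
    refine (Finset.sum_subset (by intro x hx; simp at hx ⊢; omega) ?_).symm
    intro r hr hr2
    have : r = 0 := by simp at hr hr2; omega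
    subst this
    simp [S1_zero_left]
  rw [h4]
  apply Finset.sum_congr rfl
  intro r hr
  have hr1 : 1 ≤ r ∧ r ≤ ℓ := by simpa using hr
  congr 1
  rw [asc_eval_eq_sum hr1.1]
  refine (Finset.sum_subset (Finset.range_subset_range.mpr (by omega)) ?_).symm
  intro j _ hj2
  have : r < j := by simp at hj2; omega
  simp [S1_eq_zero_of_lt this]


section DFAstuff
variable {A : Type}

def prodDFA {σ1 σ2 : Type} (M1 : DFA A σ1) (M2 : DFA A σ2) : DFA A (σ1 × σ2) where
  step s a := (M1.step s.1 a, M2.step s.2 a)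
  start := (M1.start, M2.start)
  accept := {s | s.1 ∈ M1.accept ∨ s.2 ∈ M2.accept}

lemma prodDFA_evalFrom {σ1 σ2 : Type} (M1 : DFA A σ1) (M2 : DFA A σ2)
    (s1 : σ1) (s2 : σ2) (w : List A) :
    (prodDFA M1 M2).evalFrom (s1, s2) w = (M1.evalFrom s1 w, M2.evalFrom s2 w) := by
  induction w generalizing s1 s2 with
  | nil => rfl
  | cons a w ih => simp [DFA.evalFrom] at ih ⊢; exact ih _ _

lemma isRegular_union {L1 L2 : Set (List A)} (h1 : Language.IsRegular (L1 : Language A))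
    (h2 : Language.IsRegular (L2 : Language A)) :
    Language.IsRegular ((L1 ∪ L2 : Set (List A)) : Language A) := by
  obtain ⟨σ1, i1, M1, hM1⟩ := h1
  obtain ⟨σ2, i2, M2, hM2⟩ := h2
  refine ⟨σ1 × σ2, instFintypeProd σ1 σ2, prodDFA M1 M2, ?_⟩
  ext w
  rw [DFA.mem_accepts]
  have hstart : (prodDFA M1 M2).start = (M1.start, M2.start) := rfl
  rw [DFA.eval, hstart, prodDFA_evalFrom]
  show (M1.evalFrom M1.start w ∈ M1.accept ∨ M2.evalFrom M2.start w ∈ M2.accept) ↔ _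
  rw [show (M1.evalFrom M1.start w ∈ M1.accept) = (w ∈ M1.accepts) from rfl,
      show (M2.evalFrom M2.start w ∈ M2.accept) = (w ∈ M2.accepts) from rfl, hM1, hM2]
  rfl

lemma isRegular_empty : Language.IsRegular ((∅ : Set (List A)) : Language A) := by
  refine ⟨Unit, inferInstance, ⟨fun _ _ => (), (), ∅⟩, ?_⟩
  ext w
  constructor
  · intro h; exact absurd h (by simp [DFA.mem_accepts])
  · intro h; exact absurd h (Set.notMem_empty w)

def enc (N b k : ℕ) : ℕ := if k < N then k else N + (k - N) % b

lemma enc_lt (N b k : ℕ) (hb : 1 ≤ b) : enc N b k < N + b := by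
  unfold enc
  split
  · omega
  · have := Nat.mod_lt (k - N) (show 0 < b by omega)
    omega

lemma enc_succ (N b k : ℕ) (hb : 1 ≤ b) : enc N b (enc N b k + 1) = enc N b (k + 1) := by
  unfold enc
  by_cases h1 : k < N
  · simp [h1]
  · have h2 : N ≤ k := by omega
    rw [if_neg h1]
    by_cases h5 : k + 1 < N
    · omega
    · rw [if_neg h5, if_neg (show ¬ (N + (k-N)%b + 1 < N) by omega)]
      congr 1
      rw [show N + (k-N)%b + 1 - N = (k-N)%b + 1 by omega,
          show k + 1 - N = (k-N) + 1 by omega, Nat.mod_add_mod]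

lemma enc_inj_lt {N b k k' : ℕ} (hk : k < N) (h : enc N b k = enc N b k') : k = k' := by
  unfold enc at h
  rw [if_pos hk] at h
  by_cases h2 : k' < N
  · rwa [if_pos h2] at h
  · rw [if_neg h2] at h; omega

variable [DecidableEq A]

/-- DFA following the infinite word `W`, with state cycling after `N` with period `b`. -/
def spineDFA (W : ℕ → A) (N b : ℕ) (hb : 1 ≤ b) (acc : ℕ → Prop) :
    DFA A (Option (Fin (N + b))) where
  step s a := match s with
    | none => none
    | some s => if a = W (s : ℕ) then some ⟨enc N b ((s : ℕ) + 1), enc_lt N b _ hb⟩ else none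
  start := some ⟨enc N b 0, by have := enc_lt N b 0 hb; omega⟩
  accept := {s | ∃ t : Fin (N + b), s = some t ∧ acc (t : ℕ)}

/-- prefix of length k of the infinite word W -/
def prefixW (W : ℕ → A) (k : ℕ) : List A := (List.range k).map W

lemma spineDFA_eval (W : ℕ → A) (N b : ℕ) (hb : 1 ≤ b) (acc : ℕ → Prop)
    (hW : ∀ k, N ≤ k → W k = W N) (w : List A) :
    (spineDFA W N b hb acc).eval w =
      if w = prefixW W w.length
        then some ⟨enc N b w.length, enc_lt N b _ hb⟩ else none := by
  induction w using List.reverseRecOn with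
  | nil => simp [DFA.eval, DFA.evalFrom, spineDFA, prefixW, enc]
  | append_singleton w a ih =>
    rw [DFA.eval, DFA.evalFrom_append_singleton, ← DFA.eval, ih]
    by_cases hw : w = prefixW W w.length
    · rw [if_pos hw]
      have hWenc : W (enc N b w.length) = W w.length := by
        unfold enc
        split
        · rfl
        · rw [hW (N + (w.length - N) % b) (by omega), hW w.length (by omega)]
      by_cases ha : a = W w.length
      · have hpre : w ++ [a] = prefixW W (w ++ [a]).length := by
          simp only [List.length_append, List.length_singleton, prefixW, List.range_succ,
            List.map_append]
          rw [← prefixW, ← hw]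
          simp [ha]
        rw [if_pos hpre]
        show (if a = W (enc N b w.length) then _ else _) = _
        rw [if_pos (by rw [hWenc]; exact ha)]
        simp only [Option.some.injEq]
        ext
        simp [enc_succ N b _ hb, List.length_append]
      · have hpre : ¬ (w ++ [a] = prefixW W (w ++ [a]).length) := by
          intro hcon
          apply ha
          have : (w ++ [a]).length = w.length + 1 := by simp
          rw [this] at hcon
          simp only [prefixW, List.range_succ, List.map_append] at hcon
          have := List.append_inj_right hcon (by rw [hw, prefixW]; simp)
          simpa using this
        rw [if_neg hpre]
        show (if a = W (enc N b w.length) then _ else _) = _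
        rw [if_neg (by rw [hWenc]; exact ha)]
    · rw [if_neg hw]
      have hpre : ¬ (w ++ [a] = prefixW W (w ++ [a]).length) := by
        intro hcon
        apply hw
        have : (w ++ [a]).length = w.length + 1 := by simp
        rw [this] at hcon
        simp only [prefixW, List.range_succ, List.map_append] at hcon
        have := List.append_inj_left hcon (by simp [prefixW])
        exact this
      rw [if_neg hpre]
      rfl

lemma spineDFA_accepts (W : ℕ → A) (N b : ℕ) (hb : 1 ≤ b) (acc : ℕ → Prop)
    (hW : ∀ k, N ≤ k → W k = W N) :
    (spineDFA W N b hb acc).accepts = {w | ∃ k, w = prefixW W k ∧ acc (enc N b k)} := by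
  ext w
  rw [DFA.mem_accepts, spineDFA_eval W N b hb acc hW]
  constructor
  · intro h
    by_cases hw : w = prefixW W w.length
    · rw [if_pos hw] at h
      obtain ⟨t, ht, hacc⟩ := h
      refine ⟨w.length, hw, ?_⟩
      have : (t : ℕ) = enc N b w.length := by
        have := ht.symm
        simp only [Option.some.injEq] at this
        rw [this]
      rwa [this] at hacc
    · rw [if_neg hw] at h
      obtain ⟨t, ht, _⟩ := h
      exact absurd ht.symm (by simp)
  · rintro ⟨k, rfl, hacc⟩
    have hlen : (prefixW W k).length = k := by simp [prefixW]
    rw [hlen, if_pos rfl]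
    exact ⟨_, rfl, hacc⟩

end DFAstuff

section E
variable {A : Type} [DecidableEq A]

lemma enc_def (N b k : ℕ) : enc N b k = if k < N then k else N + (k - N) % b := rfl

lemma prefixW_def (W : ℕ → A) (k : ℕ) : prefixW W k = (List.range k).map W := rfl

lemma spineDFA_accepts_ex (W : ℕ → A) (N b : ℕ) (hb : 1 ≤ b) (acc : ℕ → Prop)
    (hW : ∀ k, N ≤ k → W k = W N) :
    ∃ σ : Type, ∃ _ : Fintype σ, ∃ M : DFA A σ,
      M.accepts = {w | ∃ k, w = prefixW W k ∧ acc (enc N b k)} :=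
  ⟨Option (Fin (N + b)), inferInstance, spineDFA W N b hb acc,
    spineDFA_accepts W N b hb acc hW⟩
lemma prefixW_eq_self (u : List A) (x : A) :
    prefixW (fun i => u.getD i x) u.length = u := by
  rw [prefixW_def]
  apply List.ext_getElem
  · simp
  · intro i h1 h2
    simp [List.getD_eq_getElem u x h2, List.getElem?_eq_getElem h2]

lemma prefixW_pad (u : List A) (x : A) (k : ℕ) (hk : u.length ≤ k) :
    prefixW (fun i => if h : i < u.length then u.getD i x else x) k
      = u ++ List.replicate (k - u.length) x := by
  induction k with
  | zero =>
    have : u.length = 0 := by omega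
    have : u = [] := List.eq_nil_of_length_eq_zero this
    simp [this, prefixW_def]
  | succ k ih =>
    rcases Nat.lt_or_ge k u.length with h | h
    · have hk2 : u.length = k + 1 := by omega
      rw [show (fun i => if h : i < u.length then u.getD i x else x)
            = (fun i => u.getD i x) from funext fun i => by
          split
          · rfl
          · rw [List.getD_eq_default]; omega]
      rw [← hk2, prefixW_eq_self, Nat.sub_self]
      simp
    · rw [prefixW_def, List.range_succ, List.map_append, ← prefixW_def, ih h]
      have : k + 1 - u.length = (k - u.length) + 1 := by omega
      rw [this, List.replicate_succ']
      simp [show ¬ (k < u.length) by omega]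

lemma isRegular_singleton (x0 : A) (w : List A) :
    Language.IsRegular (({w} : Set (List A)) : Language A) := by
  obtain ⟨σ, fin, M, hM⟩ := spineDFA_accepts_ex (fun i => w.getD i x0) (w.length + 1) 1
    (le_refl 1) (· = w.length)
    (fun k hk => by
      show w.getD k x0 = w.getD (w.length + 1) x0
      rw [List.getD_eq_default _ _ (by omega), List.getD_eq_default _ _ (by omega)])
  refine ⟨σ, fin, M, ?_⟩
  rw [hM]
  ext v
  constructor
  · rintro ⟨k, rfl, hacc⟩
    rw [enc_def] at hacc
    have : k = w.length := by
      split at hacc <;> omega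
    rw [this]
    exact prefixW_eq_self w x0
  · intro hv
    have hv' : v = w := hv
    subst hv'
    refine ⟨v.length, (prefixW_eq_self v x0).symm, ?_⟩
    rw [enc_def, if_pos (by omega)]

lemma isRegular_tail (u : List A) (x : A) (a b : ℕ) (hb : 1 ≤ b) :
    Language.IsRegular
      ({v | ∃ t : ℕ, v = u ++ List.replicate (a + b * t) x} : Set (List A)) := by
  obtain ⟨σ, fin, M, hM⟩ := spineDFA_accepts_ex
    (fun i => if h : i < u.length then u.getD i x else x) (u.length + a) b hb
    (· = u.length + a)
    (fun k hk => by
      show (if h : k < u.length then u.getD k x else x)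
        = (if h : u.length + a < u.length then u.getD (u.length + a) x else x)
      rw [dif_neg (by omega), dif_neg (by omega)])
  refine ⟨σ, fin, M, ?_⟩
  rw [hM]
  ext v
  constructor
  · rintro ⟨k, rfl, hacc⟩
    rw [enc_def] at hacc
    have hge : u.length + a ≤ k ∧ (k - (u.length + a)) % b = 0 := by
      split at hacc <;> omega
    obtain ⟨t, ht⟩ := Nat.dvd_of_mod_eq_zero hge.2
    refine ⟨t, ?_⟩
    rw [prefixW_pad u x k (by omega)]
    congr 1
    congr 1
    omega
  · rintro ⟨t, rfl⟩
    refine ⟨u.length + a + b * t, ?_, ?_⟩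
    · rw [prefixW_pad u x _ (by omega)]
      congr 2
      omega
    · rw [enc_def, if_neg (by omega)]
      have : u.length + a + b * t - (u.length + a) = b * t := by omega
      rw [this, Nat.mul_mod_right]
      omega

lemma isRegular_finImage (g : ℕ → List A) (x0 : A) (m : ℕ) :
    Language.IsRegular ({w | ∃ q, q < m ∧ w = g q} : Set (List A)) := by
  induction m with
  | zero =>
    have : {w : List A | ∃ q, q < 0 ∧ w = g q} = (∅ : Set (List A)) := by
      ext w; simp
    rw [this]; exact isRegular_empty
  | succ m ih =>
    have : {w : List A | ∃ q, q < m + 1 ∧ w = g q}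
        = ({w | ∃ q, q < m ∧ w = g q} ∪ {g m} : Set (List A)) := by
      ext w
      simp only [Set.mem_setOf_eq, Set.mem_union, Set.mem_singleton_iff]
      constructor
      · rintro ⟨q, hq, rfl⟩
        rcases Nat.lt_or_ge q m with h | h
        · exact Or.inl ⟨q, h, rfl⟩
        · have : q = m := by omega
          subst this; exact Or.inr rfl
      · rintro (⟨q, hq, rfl⟩ | rfl)
        · exact ⟨q, by omega, rfl⟩
        · exact ⟨m, by omega, rfl⟩
    rw [this]
    exact isRegular_union ih (isRegular_singleton x0 (g m))
end E

-- ######## assembly helpers ########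

lemma psum_lastTuple (ℓ q t : ℕ) (hℓ : 1 ≤ ℓ) (ht : t < ℓ) :
    psum ℓ (lastTuple ℓ q) t = q := by
  rw [psum]
  rw [Finset.sum_eq_single_of_mem (⟨ℓ - 1, by omega⟩ : Fin ℓ) (Finset.mem_univ _)]
  · rw [if_pos (by simp; omega)]
    simp [lastTuple]
  · intro j _ hj
    have : (j : ℕ) ≠ ℓ - 1 := by
      intro h
      apply hj
      apply Fin.ext
      simp [h]
    simp [lastTuple, this]

lemma cast_valB_lastTuple (ℓ q : ℕ) (hℓ : 1 ≤ ℓ) :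
    ((valB ℓ (lastTuple ℓ q) : ℕ) : ℚ)
      = ∑ r ∈ Icc 1 ℓ, (ascPochhammer ℚ r).eval (q : ℚ) / (Nat.factorial r : ℚ) := by
  rw [valB_eq_bseq]
  push_cast
  rw [show (Icc 1 ℓ) = Ico 1 (ℓ + 1) from by ext x; simp]
  rw [Finset.sum_Ico_eq_sum_range]
  rw [show ℓ + 1 - 1 = ℓ from by omega]
  apply Finset.sum_congr rfl
  intro k hk
  have hkl : k < ℓ := by simpa using hk
  have h1 : bseq ℓ (lastTuple ℓ q) k = q + k := by
    rw [bseq, psum_lastTuple ℓ q _ hℓ (by omega)]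
  rw [h1]
  have h2 := cast_choose_asc q (k + 1)
  rw [show q + (k + 1) - 1 = q + k from by omega] at h2
  have h3 : (Nat.factorial (k+1) : ℚ) ≠ 0 := by
    exact_mod_cast (Nat.factorial_pos (k+1)).ne'
  rw [show 1 + k = k + 1 from by omega]
  field_simp [h2.symm]
  exact h2

/-- If the constants `c_{ℓ−1}, …, c_0` given by the recursion are integers and
nonincreasing (`c_{ℓ−1} ≥ ⋯ ≥ c_0`), then for all `q` with `βq + c_0 ≥ 0`,
`rep_ℓ(β^ℓ val_ℓ(a_ℓ^q)) = (c_{ℓ−1}−c_{ℓ−2}, …, c_1−c_0, βq + c_0)`; in particular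
`rep_ℓ(β^ℓ val_ℓ(a_ℓ^*))` is a regular language. -/
theorem repB_pow_mul_val_last (ℓ β : ℕ) (hℓ : 1 ≤ ℓ) (hβ : 1 ≤ β) (c : ℕ → ℚ)
    (hc : ∀ k < ℓ, c k =
      (Nat.factorial k : ℚ) * ((β : ℚ) ^ (ℓ - k) - 1) *
          (∑ i ∈ Finset.Icc k ℓ, (S1 i k : ℚ) / (Nat.factorial i : ℚ)) -
        ∑ i ∈ Finset.Icc (k + 2) ℓ, ∑ j ∈ Finset.Icc (k + 1) i,
          ((S1 i j : ℚ) * (Nat.factorial j : ℚ)) /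
              ((Nat.factorial i : ℚ) * (Nat.factorial (j - k) : ℚ)) *
            (c (i - 1)) ^ (j - k))
    (hint : ∀ k < ℓ, ∃ z : ℤ, c k = (z : ℚ))
    (hmono : ∀ k : ℕ, k + 1 < ℓ → c k ≤ c (k + 1)) :
    (∀ q : ℕ, 0 ≤ (β : ℚ) * (q : ℚ) + c 0 →
      ∀ i : Fin ℓ,
        ((repB ℓ (β ^ ℓ * valB ℓ (lastTuple ℓ q)) i : ℕ) : ℚ) =
          if (i : ℕ) = ℓ - 1 then (β : ℚ) * (q : ℚ) + c 0
          else c (ℓ - 1 - (i : ℕ)) - c (ℓ - 2 - (i : ℕ))) ∧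
      Language.IsRegular
        {w : List (Fin ℓ) | ∃ q : ℕ, w = wordB ℓ (repB ℓ (β ^ ℓ * valB ℓ (lastTuple ℓ q)))} := by
  classical
  -- integer versions of the constants
  have hZ : ∃ Z : ℕ → ℤ, ∀ k < ℓ, c k = ((Z k : ℤ) : ℚ) := by
    choose z hz using hint
    exact ⟨fun k => if h : k < ℓ then z k h else 0, fun k hk => by simp [hk, hz k hk]⟩
  obtain ⟨Z, hZ⟩ := hZ
  have hd : ∀ k, k + 1 < ℓ → Z k ≤ Z (k + 1) := by
    intro k hk
    have := hmono k hk
    rw [hZ k (by omega), hZ (k+1) hk] at this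
    exact_mod_cast this
  -- the explicit tuple
  set nstar : ℕ → Fin ℓ → ℕ := fun q i =>
    if (i : ℕ) = ℓ - 1 then ((β : ℤ) * q + Z 0).toNat
    else (Z (ℓ - 1 - (i : ℕ)) - Z (ℓ - 2 - (i : ℕ))).toNat with hnstar
  -- psum of nstar
  have hpsum : ∀ q : ℕ, (0 : ℤ) ≤ (β : ℤ) * q + Z 0 → ∀ d, d < ℓ →
      ((psum ℓ (nstar q) (ℓ - 1 - d) : ℕ) : ℤ) = (β : ℤ) * q + Z d := by
    intro q hM
    intro d
    induction d with
    | zero =>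
      intro _
      rw [show ℓ - 1 - 0 = ℓ - 1 from rfl, psum_succ ℓ _ (ℓ - 1) (by omega),
        psum_ge ℓ _ _ (by omega)]
      have : nstar q ⟨ℓ - 1, by omega⟩ = ((β : ℤ) * q + Z 0).toNat := by
        rw [hnstar]; simp
      rw [this]
      push_cast
      omega
    | succ d ih =>
      intro hdl
      have ht : ℓ - 1 - (d + 1) < ℓ := by omega
      rw [psum_succ ℓ _ _ ht]
      have harg : ℓ - 1 - (d + 1) + 1 = ℓ - 1 - d := by omega
      rw [harg]
      have hn : nstar q ⟨ℓ - 1 - (d + 1), ht⟩ = (Z (d + 1) - Z d).toNat := by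
        rw [hnstar]
        show (if ℓ - 1 - (d+1) = ℓ - 1 then ((β : ℤ) * q + Z 0).toNat
          else (Z (ℓ - 1 - (ℓ - 1 - (d+1))) - Z (ℓ - 2 - (ℓ - 1 - (d+1)))).toNat)
          = (Z (d + 1) - Z d).toNat
        rw [if_neg (by omega), show ℓ - 1 - (ℓ - 1 - (d+1)) = d + 1 from by omega,
          show ℓ - 2 - (ℓ - 1 - (d+1)) = d from by omega]
      rw [hn]
      have hZd := hd d hdl
      push_cast
      rw [ih (by omega)]
      omega
  -- the key fact
  have key : ∀ q : ℕ, 0 ≤ (β : ℚ) * (q : ℚ) + c 0 →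
      repB ℓ (β ^ ℓ * valB ℓ (lastTuple ℓ q)) = nstar q := by
    intro q hq
    have hM : (0 : ℤ) ≤ (β : ℤ) * q + Z 0 := by
      rw [hZ 0 (by omega)] at hq
      exact_mod_cast hq
    -- cast of valB nstar
    have hcast : ((valB ℓ (nstar q) : ℕ) : ℚ)
        = ∑ r ∈ Icc 1 ℓ, (ascPochhammer ℚ r).eval ((β:ℚ) * q + c (r-1)) / (Nat.factorial r : ℚ) := by
      rw [valB_eq_bseq]
      push_cast
      rw [show (Icc 1 ℓ) = Ico 1 (ℓ + 1) from by ext x; simp]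
      rw [Finset.sum_Ico_eq_sum_range]
      rw [show ℓ + 1 - 1 = ℓ from by omega]
      apply Finset.sum_congr rfl
      intro k hk
      have hkl : k < ℓ := by simpa using hk
      have hps : ((psum ℓ (nstar q) (ℓ - 1 - k) : ℕ) : ℚ) = (β:ℚ) * q + c k := by
        have := hpsum q hM k hkl
        rw [hZ k hkl]
        exact_mod_cast congrArg (fun z : ℤ => (z : ℚ)) this
      have h2 := cast_choose_asc (psum ℓ (nstar q) (ℓ - 1 - k)) (k + 1)
      rw [show psum ℓ (nstar q) (ℓ - 1 - k) + (k + 1) - 1 = psum ℓ (nstar q) (ℓ - 1 - k) + k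
        from by omega] at h2
      rw [hps] at h2
      have h3 : (Nat.factorial (k+1) : ℚ) ≠ 0 := by
        exact_mod_cast (Nat.factorial_pos (k+1)).ne'
      rw [show 1 + k = k + 1 from by omega]
      have hb : bseq ℓ (nstar q) k = psum ℓ (nstar q) (ℓ - 1 - k) + k := rfl
      rw [hb, show k + 1 - 1 = k from rfl, eq_div_iff h3]
      exact h2
    have hval : valB ℓ (nstar q) = β ^ ℓ * valB ℓ (lastTuple ℓ q) := by
      have hQ : ((valB ℓ (nstar q) : ℕ) : ℚ) = ((β ^ ℓ * valB ℓ (lastTuple ℓ q) : ℕ) : ℚ) := by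
        rw [hcast, main_identity ℓ β c hc (q : ℚ)]
        push_cast
        rw [cast_valB_lastTuple ℓ q hℓ]
      exact_mod_cast hQ
    rw [← hval, repB]
    exact Function.leftInverse_invFun (valB_injective ℓ) (nstar q)
  constructor
  · intro q hq i
    rw [key q hq]
    by_cases hi : (i : ℕ) = ℓ - 1
    · rw [if_pos hi]
      have hun : nstar q i = if (i : ℕ) = ℓ - 1 then ((β : ℤ) * q + Z 0).toNat
          else (Z (ℓ - 1 - (i : ℕ)) - Z (ℓ - 2 - (i : ℕ))).toNat := rfl
      rw [hun, if_pos hi]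
      have hM : (0 : ℤ) ≤ (β : ℤ) * q + Z 0 := by
        rw [hZ 0 (by omega)] at hq
        exact_mod_cast hq
      rw [hZ 0 (by omega)]
      have h5 := Int.toNat_of_nonneg hM
      rw [show ((((β : ℤ) * q + Z 0).toNat : ℕ) : ℚ) = (((β:ℤ) * q + Z 0 : ℤ) : ℚ) from by
        exact_mod_cast congrArg (fun z : ℤ => (z : ℚ)) h5]
      push_cast
      ring
    · rw [if_neg hi]
      have hilt : (i : ℕ) < ℓ - 1 := by
        have := i.isLt
        omega
      have hun : nstar q i = if (i : ℕ) = ℓ - 1 then ((β : ℤ) * q + Z 0).toNat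
          else (Z (ℓ - 1 - (i : ℕ)) - Z (ℓ - 2 - (i : ℕ))).toNat := rfl
      rw [hun, if_neg hi]
      have hnn : (0 : ℤ) ≤ Z (ℓ - 1 - (i : ℕ)) - Z (ℓ - 2 - (i : ℕ)) := by
        have h := hd (ℓ - 2 - (i : ℕ)) (by omega)
        rw [show ℓ - 2 - (i : ℕ) + 1 = ℓ - 1 - (i : ℕ) from by omega] at h
        omega
      rw [hZ (ℓ - 1 - (i : ℕ)) (by omega), hZ (ℓ - 2 - (i : ℕ)) (by omega)]
      have h5 := Int.toNat_of_nonneg hnn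
      rw [show (((Z (ℓ - 1 - (i : ℕ)) - Z (ℓ - 2 - (i : ℕ))).toNat : ℕ) : ℚ)
          = ((Z (ℓ - 1 - (i : ℕ)) - Z (ℓ - 2 - (i : ℕ)) : ℤ) : ℚ) from by
        exact_mod_cast congrArg (fun z : ℤ => (z : ℚ)) h5]
      push_cast
      ring
  · -- regularity
    obtain ⟨m, rfl⟩ : ∃ m, ℓ = m + 1 := ⟨ℓ - 1, by omega⟩
    set q0 : ℕ := (-(Z 0)).toNat with hq0
    set g : ℕ → List (Fin (m+1)) :=
      fun q => wordB (m+1) (repB (m+1) (β ^ (m+1) * valB (m+1) (lastTuple (m+1) q))) with hg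
    set lastL : Fin (m+1) := Fin.last m with hlast
    set u : List (Fin (m+1)) :=
      (List.ofFn (fun i : Fin m =>
        List.replicate ((Z (m - (i : ℕ)) - Z (m - 1 - (i : ℕ))).toNat) (i.castSucc))).flatten
      with hu
    set e0 : ℕ := ((β : ℤ) * q0 + Z 0).toNat with he0
    have hsplit : ∀ n : Fin (m+1) → ℕ, wordB (m+1) n =
        (List.ofFn (fun i : Fin m => List.replicate (n i.castSucc) (i.castSucc : Fin (m+1)))).flatten
          ++ List.replicate (n lastL) lastL := by
      intro n
      rw [wordB, List.ofFn_succ']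
      rw [show ∀ l : List (List (Fin (m+1))), ∀ x, (l.concat x).flatten = l.flatten ++ x from
        fun l x => by rw [List.concat_eq_append, List.flatten_append]; simp]
    have hgood : ∀ q : ℕ, q0 ≤ q → g q = u ++ List.replicate (e0 + β * (q - q0)) lastL := by
      intro q hqq
      have hM : (0 : ℤ) ≤ (β : ℤ) * q + Z 0 := by
        have h1 : (q0 : ℤ) ≤ q := by exact_mod_cast hqq
        have h2 : -(Z 0) ≤ (q0 : ℤ) := by rw [hq0]; exact Int.self_le_toNat _
        have h3 : (q : ℤ) ≤ (β : ℤ) * q := by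
          have : (1 : ℤ) ≤ β := by exact_mod_cast hβ
          nlinarith [Int.natCast_nonneg q]
        omega
      have hq : 0 ≤ (β : ℚ) * (q : ℚ) + c 0 := by
        rw [hZ 0 (by omega)]
        exact_mod_cast hM
      rw [hg]
      simp only []
      rw [key q hq, hsplit]
      congr 1
      · rw [hu]
        refine congrArg List.flatten (congrArg List.ofFn (funext fun i => ?_))
        have hval : ((i.castSucc : Fin (m+1)) : ℕ) = (i : ℕ) := rfl
        have hun : nstar q i.castSucc = if ((i.castSucc : Fin (m+1)) : ℕ) = m + 1 - 1
            then ((β : ℤ) * q + Z 0).toNat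
            else (Z (m + 1 - 1 - ((i.castSucc : Fin (m+1)) : ℕ))
              - Z (m + 1 - 2 - ((i.castSucc : Fin (m+1)) : ℕ))).toNat := rfl
        have hlt := i.isLt
        rw [hun, hval, if_neg (by omega), show m + 1 - 1 - (i : ℕ) = m - (i : ℕ) from by omega,
          show m + 1 - 2 - (i : ℕ) = m - 1 - (i : ℕ) from by omega]
      · congr 1
        have : nstar q lastL = ((β : ℤ) * q + Z 0).toNat := by
          rw [hnstar, hlast]
          simp
        rw [this]
        have hM0 : (0 : ℤ) ≤ (β : ℤ) * q0 + Z 0 := by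
          have h2 : -(Z 0) ≤ (q0 : ℤ) := by rw [hq0]; exact Int.self_le_toNat _
          have h3 : (q0 : ℤ) ≤ (β : ℤ) * q0 := by
            have : (1 : ℤ) ≤ β := by exact_mod_cast hβ
            nlinarith [Int.natCast_nonneg q0]
          omega
        have hprod : ((β : ℤ) * (q : ℤ)) = (β : ℤ) * (q0 : ℤ) + ((β * (q - q0) : ℕ) : ℤ) := by
          push_cast [Nat.cast_sub hqq]
          ring
        rw [he0]
        omega
    have hlang : {w : List (Fin (m+1)) | ∃ q : ℕ, w = g q}
        = ({w | ∃ q, q < q0 ∧ w = g q} ∪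
           {v | ∃ t : ℕ, v = u ++ List.replicate (e0 + β * t) lastL} : Set (List (Fin (m+1)))) := by
      ext w
      constructor
      · rintro ⟨q, rfl⟩
        rcases Nat.lt_or_ge q q0 with h | h
        · exact Or.inl ⟨q, h, rfl⟩
        · exact Or.inr ⟨q - q0, hgood q h⟩
      · rintro (⟨q, _, rfl⟩ | ⟨t, rfl⟩)
        · exact ⟨q, rfl⟩
        · refine ⟨q0 + t, ?_⟩
          rw [hgood (q0 + t) (by omega), show q0 + t - q0 = t from by omega]
    rw [show {w : List (Fin (m+1)) | ∃ q : ℕ,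
        w = wordB (m+1) (repB (m+1) (β ^ (m+1) * valB (m+1) (lastTuple (m+1) q)))}
      = {w : List (Fin (m+1)) | ∃ q : ℕ, w = g q} from rfl]
    rw [hlang]
    exact isRegular_union (isRegular_finImage g lastL q0)
      (isRegular_tail u lastL e0 β hβ)
end

section
/- Let ℓ ≥ 1, β ≥ 1 and 0 ≤ k < ℓ be integers. Let A = {p_0 + m_1·p_1 + ⋯ + m_k·p_k : m_1,…,m_k ∈ ℕ} ⊆ ℕ^ℓ be a linear set whose periods p_1,…,p_k ∈ ℕ^ℓ are linearly independent over ℚ. Define F : ℕ^ℓ → ℕ^ℓ by F(n) = rep_ℓ(β^ℓ · val_ℓ(n)). If there exist indices 1 ≤ j_1 < j_2 < ⋯ < j_{k+1} ≤ ℓ and a sequence (x^{(m)})_{m ∈ ℕ} of elements of F(A) such that min(x^{(m)}_{j_1}, …, x^{(m)}_{j_{k+1}}) → ∞ as m → ∞, then the language {word(F(n)) : n ∈ A} is not regular. -/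
open Nat

section Aux

lemma valB_term_le (ℓ : ℕ) (hℓ : 1 ≤ ℓ) (n : Fin ℓ → ℕ) :
    Nat.choose ((∑ i, n i) + (ℓ - 1)) ℓ ≤ valB ℓ n := by
  have h0 : (0 : ℕ) < ℓ := hℓ
  have hle := Finset.single_le_sum
    (f := fun i : Fin ℓ => Nat.choose
      ((∑ j ∈ Finset.univ.filter (fun j => i ≤ j), n j) + (ℓ - 1 - (i : ℕ))) (ℓ - (i : ℕ)))
    (fun i _ => Nat.zero_le _) (Finset.mem_univ (⟨0, h0⟩ : Fin ℓ))
  have hfil : (Finset.univ.filter (fun j => (⟨0, h0⟩ : Fin ℓ) ≤ j)) = Finset.univ :=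
    Finset.filter_true_of_mem (fun j _ => by simp [Fin.le_def])
  dsimp only at hle
  rw [hfil] at hle
  simpa [valB] using hle

lemma pow_sum_le_valB (ℓ : ℕ) (hℓ : 1 ≤ ℓ) (n : Fin ℓ → ℕ) :
    (∑ i, n i) ^ ℓ ≤ ℓ ! * valB ℓ n := by
  have h2 : ((∑ i, n i) + (ℓ - 1) + 1 - ℓ) ^ ℓ ≤
      Nat.descFactorial ((∑ i, n i) + (ℓ - 1)) ℓ := Nat.pow_sub_le_descFactorial _ _
  rw [Nat.descFactorial_eq_factorial_mul_choose] at h2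
  have h3 : (∑ i, n i) + (ℓ - 1) + 1 - ℓ = ∑ i, n i := by omega
  rw [h3] at h2
  exact h2.trans (Nat.mul_le_mul_left _ (valB_term_le ℓ hℓ n))

lemma valB_le (ℓ : ℕ) (hℓ : 1 ≤ ℓ) (n : Fin ℓ → ℕ) :
    valB ℓ n ≤ ℓ * ((∑ i, n i) + ℓ) ^ ℓ := by
  have hbound : ∀ i : Fin ℓ, Nat.choose
      ((∑ j ∈ Finset.univ.filter (fun j => i ≤ j), n j) + (ℓ - 1 - (i : ℕ))) (ℓ - (i : ℕ))
      ≤ ((∑ i, n i) + ℓ) ^ ℓ := by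
    intro i
    have hs : (∑ j ∈ Finset.univ.filter (fun j => i ≤ j), n j) ≤ ∑ j, n j :=
      Finset.sum_le_sum_of_subset (Finset.filter_subset _ _)
    calc Nat.choose ((∑ j ∈ Finset.univ.filter (fun j => i ≤ j), n j) + (ℓ - 1 - (i : ℕ)))
          (ℓ - (i : ℕ))
        ≤ ((∑ j ∈ Finset.univ.filter (fun j => i ≤ j), n j) + (ℓ - 1 - (i : ℕ))) ^ (ℓ - (i : ℕ)) :=
          Nat.choose_le_pow _ _
      _ ≤ ((∑ i, n i) + ℓ) ^ (ℓ - (i : ℕ)) := Nat.pow_le_pow_left (by omega) _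
      _ ≤ ((∑ i, n i) + ℓ) ^ ℓ := Nat.pow_le_pow_right (by omega) (by omega)
  calc valB ℓ n ≤ Finset.univ.card • (((∑ i, n i) + ℓ) ^ ℓ) :=
        Finset.sum_le_card_nsmul _ _ _ (fun i _ => hbound i)
    _ = ℓ * ((∑ i, n i) + ℓ) ^ ℓ := by simp [smul_eq_mul]

lemma valB_succ (ℓ : ℕ) (n0 : ℕ) (n' : Fin ℓ → ℕ) :
    valB (ℓ + 1) (Fin.cons n0 n') =
      Nat.choose ((n0 + ∑ i, n' i) + ℓ) (ℓ + 1) + valB ℓ n' := by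
  unfold valB
  rw [Fin.sum_univ_succ]
  congr 1
  · have hfil : (Finset.univ.filter (fun j => (0 : Fin (ℓ + 1)) ≤ j)) = Finset.univ :=
      Finset.filter_true_of_mem (fun j _ => Fin.zero_le j)
    rw [hfil, Fin.sum_univ_succ]
    simp
  · apply Finset.sum_congr rfl
    intro i _
    have hsum : (∑ j ∈ Finset.univ.filter (fun j => i.succ ≤ j), Fin.cons n0 n' j)
        = ∑ j ∈ Finset.univ.filter (fun j => i ≤ j), n' j := by
      rw [Finset.sum_filter, Finset.sum_filter, Fin.sum_univ_succ]
      have h0 : ¬ (i.succ ≤ (0 : Fin (ℓ + 1))) := by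
        simp [Fin.le_def]
      rw [if_neg h0]
      simp [Fin.succ_le_succ_iff]
    rw [hsum]
    have hv : ((i.succ : Fin (ℓ + 1)) : ℕ) = (i : ℕ) + 1 := rfl
    rw [hv]
    congr 1 <;> omega

lemma succ_le_choose (m : ℕ) : ∀ k, 1 ≤ k → m + 1 ≤ Nat.choose (m + k) k := by
  intro k
  induction k with
  | zero => omega
  | succ k ih =>
    intro _
    rcases Nat.eq_zero_or_pos k with hk | hk
    · subst hk; simp
    · have h1 : m + (k + 1) = (m + k) + 1 := by omega
      rw [h1, Nat.choose_succ_succ]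
      have := ih hk
      omega

lemma valB_surj : ∀ ℓ : ℕ, 1 ≤ ℓ → ∀ N : ℕ, ∃ n : Fin ℓ → ℕ, valB ℓ n = N := by
  intro ℓ
  induction ℓ with
  | zero => omega
  | succ l IH =>
    intro _ N
    rcases Nat.eq_zero_or_pos l with hl | hl
    · subst hl
      refine ⟨fun _ => N, ?_⟩
      unfold valB
      simp
    · classical
      set P : ℕ → Prop := fun c => Nat.choose c (l + 1) ≤ N with hP
      set c := Nat.findGreatest P (N + l + 1) with hc
      have hPc : P c := Nat.findGreatest_spec (Nat.zero_le _) (by simp [hP])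
      have hub : ¬ P (N + l + 1) := by
        have h1 : N + l + 1 = N + (l + 1) := by omega
        have h2 := succ_le_choose N (l + 1) (by omega)
        simp only [hP, h1]
        omega
      have hcle : c ≤ N + l + 1 := Nat.findGreatest_le _
      have hclt : c < N + l + 1 := by
        rcases Nat.lt_or_ge c (N + l + 1) with h | h
        · exact h
        · exfalso
          have hce : c = N + l + 1 := le_antisymm hcle h
          rw [hce] at hPc
          exact hub hPc
      have hnext : ¬ P (c + 1) :=
        Nat.findGreatest_is_greatest (n := N + l + 1) (by rw [← hc]; omega) (by omega)
      have hNlt : N < Nat.choose (c + 1) (l + 1) := by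
        simp only [hP] at hnext; omega
      have hsplit : Nat.choose (c + 1) (l + 1) = Nat.choose c l + Nat.choose c (l + 1) :=
        Nat.choose_succ_succ c l
      obtain ⟨n', hn'⟩ := IH hl (N - Nat.choose c (l + 1))
      have hfirst := valB_term_le l hl n'
      rw [hn'] at hfirst
      have hPcle : Nat.choose c (l + 1) ≤ N := hPc
      have hN'lt : N - Nat.choose c (l + 1) < Nat.choose c l := by omega
      have hsc : (∑ i, n' i) + l ≤ c := by
        by_contra hcon
        push_neg at hcon
        have : Nat.choose c l ≤ Nat.choose ((∑ i, n' i) + (l - 1)) l :=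
          Nat.choose_le_choose l (by omega)
        omega
      refine ⟨Fin.cons (c - l - ∑ i, n' i) n', ?_⟩
      rw [valB_succ, hn']
      have harg : (c - l - ∑ i, n' i) + (∑ i, n' i) + l = c := by omega
      rw [harg]
      omega

lemma iterate_period {σ : Type*} [Fintype σ] (f : σ → σ) (q : σ) (c t : ℕ)
    (hc : Fintype.card σ ≤ c) :
    f^[c + t * (Fintype.card σ)!] q = f^[c] q := by
  classical
  obtain ⟨a, ha, b, hb, hab, heq⟩ := Finset.exists_ne_map_eq_of_card_lt_of_maps_to
    (s := Finset.range (Fintype.card σ + 1)) (t := (Finset.univ : Finset σ))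
    (by simp) (fun a _ => Finset.mem_univ (f^[a] q))
  simp only [Finset.mem_range] at ha hb
  obtain ⟨a, b, hlt, hble, heq⟩ : ∃ a b : ℕ, a < b ∧ b ≤ Fintype.card σ ∧ f^[a] q = f^[b] q := by
    rcases (lt_or_gt_of_ne hab) with h | h
    · exact ⟨a, b, h, by omega, heq⟩
    · exact ⟨b, a, h, by omega, heq.symm⟩
  have hstep : ∀ m, a ≤ m → f^[m + (b - a)] q = f^[m] q := by
    intro m hm
    have h1 : m + (b - a) = (m - a) + b := by omega
    rw [h1, Function.iterate_add_apply, ← heq, ← Function.iterate_add_apply]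
    congr 1
    omega
  have hmul : ∀ u m, a ≤ m → f^[m + u * (b - a)] q = f^[m] q := by
    intro u
    induction u with
    | zero => intro m _; simp
    | succ u ih =>
      intro m hm
      have h1 : m + (u + 1) * (b - a) = (m + u * (b - a)) + (b - a) := by ring
      rw [h1, hstep _ (by omega), ih m hm]
  obtain ⟨u0, hu0⟩ : (b - a) ∣ (Fintype.card σ)! :=
    Nat.dvd_factorial (by omega) (by omega)
  have h2 : t * (Fintype.card σ)! = (t * u0) * (b - a) := by rw [hu0]; ring
  rw [h2]
  exact hmul (t * u0) c (by omega)

lemma evalFrom_replicate {α σ : Type*} (M : DFA α σ) (a : α) :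
    ∀ (c : ℕ) (q : σ),
      M.evalFrom q (List.replicate c a) = (fun s => M.step s a)^[c] q := by
  intro c
  induction c with
  | zero => intro q; rfl
  | succ c ih =>
    intro q
    rw [List.replicate_succ]
    show M.evalFrom (M.step q a) (List.replicate c a) = _
    rw [ih, Function.iterate_succ_apply]

lemma evalFrom_append' {α σ : Type*} (M : DFA α σ) (q : σ) (l1 l2 : List α) :
    M.evalFrom q (l1 ++ l2) = M.evalFrom (M.evalFrom q l1) l2 :=
  List.foldl_append ..

lemma evalFrom_flatten_congr {α σ : Type*} (M : DFA α σ) :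
    ∀ (L1 L2 : List (List α)), L1.length = L2.length →
      (∀ (i : ℕ) (h1 : i < L1.length) (h2 : i < L2.length) (q : σ),
        M.evalFrom q (L1.get ⟨i, h1⟩) = M.evalFrom q (L2.get ⟨i, h2⟩)) →
      ∀ q, M.evalFrom q L1.flatten = M.evalFrom q L2.flatten := by
  intro L1
  induction L1 with
  | nil =>
    intro L2 hlen _ q
    cases L2 with
    | nil => rfl
    | cons _ _ => simp at hlen
  | cons l1 L1 ih =>
    intro L2 hlen hblocks q
    cases L2 with
    | nil => simp at hlen
    | cons l2 L2 =>
      rw [List.flatten_cons, List.flatten_cons, evalFrom_append', evalFrom_append']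
      have h0 : M.evalFrom q l1 = M.evalFrom q l2 := hblocks 0 (by simp) (by simp) q
      rw [h0]
      exact ih L2 (by simpa using hlen)
        (fun i h1 h2 q' => hblocks (i + 1) (by simpa using h1) (by simpa using h2) q') _

lemma evalFrom_wordB_congr {ℓ : ℕ} {σ : Type*} (M : DFA (Fin ℓ) σ) (m n : Fin ℓ → ℕ)
    (h : ∀ (i : Fin ℓ) (q : σ),
      M.evalFrom q (List.replicate (m i) i) = M.evalFrom q (List.replicate (n i) i)) :
    ∀ q, M.evalFrom q (wordB ℓ m) = M.evalFrom q (wordB ℓ n) := by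
  intro q
  apply evalFrom_flatten_congr M _ _ (by simp)
  intro i h1 h2 q'
  simp only [List.get_ofFn]
  exact h _ q'

lemma count_wordB (ℓ : ℕ) (n : Fin ℓ → ℕ) (i : Fin ℓ) :
    (wordB ℓ n).count i = n i := by
  unfold wordB
  rw [List.count_flatten, List.map_ofFn, List.sum_ofFn]
  simp only [Function.comp_apply, List.count_replicate]
  simp [Finset.sum_ite_eq]

lemma wordB_inj (ℓ : ℕ) {m n : Fin ℓ → ℕ} (h : wordB ℓ m = wordB ℓ n) : m = n := by
  funext i
  rw [← count_wordB ℓ m i, ← count_wordB ℓ n i, h]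

end Aux

/-- If `A ⊆ ℕ^ℓ` is a `k`-dimensional linear set (`k < ℓ`) and the image of `A` under
multiplication by `β^ℓ` (read on representations) contains a sequence whose minimum over
some `k+1` fixed coordinates tends to infinity, then the image of the corresponding
subset of `B_ℓ` under multiplication by `β^ℓ` is not regular. -/
theorem image_not_regular_of_escaping_sequence (ℓ β k : ℕ) (hℓ : 1 ≤ ℓ) (hβ : 1 ≤ β)
    (hk : k < ℓ) (p0 : Fin ℓ → ℕ) (p : Fin k → Fin ℓ → ℕ)
    (hindep : LinearIndependent ℚ (fun r : Fin k => fun i : Fin ℓ => ((p r i : ℚ))))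
    (A : Set (Fin ℓ → ℕ))
    (hA : A = {n | ∃ m : Fin k → ℕ, n = fun i => p0 i + ∑ r : Fin k, m r * p r i})
    (F : (Fin ℓ → ℕ) → (Fin ℓ → ℕ))
    (hF : F = fun n => repB ℓ (β ^ ℓ * valB ℓ n))
    (j : Fin (k + 1) → Fin ℓ) (hj : StrictMono j)
    (x : ℕ → (Fin ℓ → ℕ)) (hx : ∀ m : ℕ, x m ∈ F '' A)
    (hesc : ∀ B : ℕ, ∃ M : ℕ, ∀ m ≥ M, ∀ r : Fin (k + 1), B ≤ x m (j r)) :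
    ¬ Language.IsRegular {w : List (Fin ℓ) | ∃ n ∈ A, w = wordB ℓ (F n)} := by
  classical
  intro hreg
  obtain ⟨σ, instF, M, hM⟩ := hreg
  have hval_rep : ∀ X : ℕ, valB ℓ (repB ℓ X) = X := fun X =>
    Function.invFun_eq (valB_surj ℓ hℓ X)
  obtain ⟨M0, hM0⟩ := hesc (Fintype.card σ)
  set c0 : Fin ℓ → ℕ := x M0 with hc0def
  have hc0mem : c0 ∈ F '' A := hx M0
  have hc0big : ∀ r, Fintype.card σ ≤ c0 (j r) := fun r => hM0 M0 le_rfl r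
  set d : ℕ := (Fintype.card σ)! with hdd
  have hd1 : 1 ≤ d := Nat.factorial_pos _
  set nt : (Fin (k + 1) → ℕ) → (Fin ℓ → ℕ) :=
    fun t i => c0 i + d * ∑ r, (if j r = i then t r else 0) with hnt
  have hnt_j : ∀ t r, nt t (j r) = c0 (j r) + d * t r := by
    intro t r
    simp only [hnt]
    congr 1
    congr 1
    have hcond : ∀ r' : Fin (k + 1),
        (if j r' = j r then t r' else 0) = (if r' = r then t r' else 0) := by
      intro r'
      by_cases h : r' = r
      · subst h; simp
      · rw [if_neg (fun hh => h (hj.injective hh)), if_neg h]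
    rw [Finset.sum_congr rfl (fun r' _ => hcond r')]
    simp
  have hnt_other : ∀ t i, (∀ r, j r ≠ i) → nt t i = c0 i := by
    intro t i hi
    simp only [hnt]
    have h0 : ∑ r, (if j r = i then t r else 0) = 0 :=
      Finset.sum_eq_zero (fun r _ => if_neg (hi r))
    simp [h0]
  -- every grid vector lies in F '' A
  have hgrid : ∀ t : Fin (k + 1) → ℕ, nt t ∈ F '' A := by
    intro t
    have hbase : wordB ℓ c0 ∈ M.accepts := by
      rw [hM]
      obtain ⟨a, haA, haF⟩ := hc0mem
      exact ⟨a, haA, by rw [haF]⟩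
    have hsame : ∀ q, M.evalFrom q (wordB ℓ (nt t)) = M.evalFrom q (wordB ℓ c0) := by
      apply evalFrom_wordB_congr
      intro i q
      by_cases hi : ∃ r, j r = i
      · obtain ⟨r, hr⟩ := hi
        subst hr
        rw [hnt_j t r, evalFrom_replicate, evalFrom_replicate, Nat.mul_comm d (t r)]
        exact iterate_period _ q _ _ (hc0big r)
      · push_neg at hi
        rw [hnt_other t i hi]
    have hacc : wordB ℓ (nt t) ∈ M.accepts := by
      rw [DFA.mem_accepts] at hbase ⊢
      show M.evalFrom M.start _ ∈ M.accept
      rw [hsame M.start]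
      exact hbase
    rw [hM] at hacc
    obtain ⟨a, haA, hw⟩ := hacc
    exact ⟨a, haA, (wordB_inj ℓ hw).symm⟩
  -- counting setup
  set Sc : ℕ := ∑ i, c0 i with hSc
  set E : ℕ := Sc + d * (k + 1) with hE
  set K : ℕ := ℓ ! * ℓ * (E + ℓ) with hK
  set B : ℕ := (K + 1) ^ k + 1 with hB
  have hB1 : 1 ≤ B := Nat.le_add_left 1 _
  have hchoice : ∀ t : Fin (k + 1) → Fin B, ∃ m : Fin k → ℕ,
      F (fun i => p0 i + ∑ r : Fin k, m r * p r i) = nt (fun r => (t r : ℕ)) ∧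
      ∀ r, m r ≤ K * B := by
    intro t
    obtain ⟨a, haA, haF⟩ := hgrid (fun r => (t r : ℕ))
    rw [hA] at haA
    obtain ⟨m, hm⟩ := haA
    refine ⟨m, by rw [← hm]; exact haF, ?_⟩
    -- bounds
    have hvg : valB ℓ (nt (fun r => (t r : ℕ))) = β ^ ℓ * valB ℓ a := by
      rw [← haF, hF]
      exact hval_rep _
    have hva : valB ℓ a ≤ valB ℓ (nt (fun r => (t r : ℕ))) := by
      rw [hvg]
      exact Nat.le_mul_of_pos_left _ (by positivity)
    have hsumg : (∑ i, nt (fun r => (t r : ℕ)) i) ≤ E * B := by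
      have h1 : (∑ i, nt (fun r => (t r : ℕ)) i) = Sc + d * ∑ r, ((t r : ℕ)) := by
        simp only [hnt]
        rw [Finset.sum_add_distrib, ← Finset.mul_sum]
        congr 1
        congr 1
        rw [Finset.sum_comm]
        apply Finset.sum_congr rfl
        intro r _
        simp
      have h2 : (∑ r, ((t r : ℕ))) ≤ (k + 1) * B := by
        calc (∑ r, ((t r : ℕ))) ≤ ∑ _r : Fin (k + 1), B :=
              Finset.sum_le_sum (fun r _ => le_of_lt (t r).isLt)
          _ = (k + 1) * B := by simp [Finset.sum_const, smul_eq_mul]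
      have h3 : Sc ≤ Sc * B := Nat.le_mul_of_pos_right _ (by omega)
      have h4 : E * B = Sc * B + d * ((k + 1) * B) := by rw [hE, add_mul, mul_assoc]
      have h5 : d * (∑ r, ((t r : ℕ))) ≤ d * ((k + 1) * B) := Nat.mul_le_mul_left _ h2
      omega
    have hvgle : valB ℓ (nt (fun r => (t r : ℕ))) ≤ ℓ * ((E + ℓ) * B) ^ ℓ := by
      calc valB ℓ (nt (fun r => (t r : ℕ)))
          ≤ ℓ * ((∑ i, nt (fun r => (t r : ℕ)) i) + ℓ) ^ ℓ := valB_le ℓ hℓ _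
        _ ≤ ℓ * ((E + ℓ) * B) ^ ℓ := by
            apply Nat.mul_le_mul_left
            apply Nat.pow_le_pow_left
            have h6 : ℓ ≤ ℓ * B := Nat.le_mul_of_pos_right _ (by omega)
            have h7 : (E + ℓ) * B = E * B + ℓ * B := add_mul _ _ _
            omega
    have hsa : (∑ i, a i) ≤ K * B := by
      have h1 : (∑ i, a i) ^ ℓ ≤ ℓ ! * valB ℓ a := pow_sum_le_valB ℓ hℓ a
      have h2 : ℓ ! * valB ℓ a ≤ ℓ ! * (ℓ * ((E + ℓ) * B) ^ ℓ) :=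
        Nat.mul_le_mul_left _ (hva.trans hvgle)
      have h4 : ℓ ! * ℓ ≤ (ℓ ! * ℓ) ^ ℓ := Nat.le_self_pow (by omega) _
      have hKB : K * B = (ℓ ! * ℓ) * ((E + ℓ) * B) := by rw [hK]; ring
      have e1 : ((ℓ ! * ℓ) * ((E + ℓ) * B)) ^ ℓ = (ℓ ! * ℓ) ^ ℓ * ((E + ℓ) * B) ^ ℓ :=
        mul_pow _ _ _
      have h3 : ℓ ! * (ℓ * ((E + ℓ) * B) ^ ℓ) ≤ (K * B) ^ ℓ := by
        have e2 : (K * B) ^ ℓ = (ℓ ! * ℓ) ^ ℓ * ((E + ℓ) * B) ^ ℓ := by rw [hKB, e1]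
        rw [e2, ← mul_assoc]
        exact Nat.mul_le_mul_right _ h4
      exact (Nat.pow_le_pow_iff_left (by omega)).mp (h1.trans (h2.trans h3))
    intro r
    have hpr : (fun i : Fin ℓ => ((p r i : ℚ))) ≠ 0 := hindep.ne_zero r
    have hex : ∃ i0, p r i0 ≠ 0 := by
      by_contra hcon
      push_neg at hcon
      apply hpr
      funext i
      simp [hcon i]
    obtain ⟨i0, hi0⟩ := hex
    have h1 : m r ≤ m r * p r i0 := Nat.le_mul_of_pos_right _ (by omega)
    have h2 : m r * p r i0 ≤ ∑ r' : Fin k, m r' * p r' i0 :=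
      Finset.single_le_sum (f := fun r' : Fin k => m r' * p r' i0)
        (fun r' _ => Nat.zero_le _) (Finset.mem_univ r)
    have h3 : a i0 = p0 i0 + ∑ r' : Fin k, m r' * p r' i0 := by rw [hm]
    have h4 : a i0 ≤ ∑ i, a i :=
      Finset.single_le_sum (fun i _ => Nat.zero_le _) (Finset.mem_univ i0)
    omega
  choose mf hmf hmb using hchoice
  have hinj : Function.Injective (fun t : Fin (k + 1) → Fin B =>
      fun r : Fin k => (⟨mf t r, Nat.lt_succ_of_le (hmb t r)⟩ : Fin (K * B + 1))) := by
    intro t t' h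
    have hmeq : mf t = mf t' := by
      funext r
      exact congrArg Fin.val (congrFun h r)
    have hnteq : nt (fun r => (t r : ℕ)) = nt (fun r => (t' r : ℕ)) := by
      rw [← hmf t, ← hmf t', hmeq]
    funext r
    have he := congrFun hnteq (j r)
    rw [hnt_j, hnt_j] at he
    have hval : ((t r : ℕ)) = ((t' r : ℕ)) :=
      Nat.eq_of_mul_eq_mul_left (by omega : 0 < d) (by omega)
    exact Fin.ext hval
  have hcard := Fintype.card_le_of_injective _ hinj
  rw [Fintype.card_fun, Fintype.card_fun, Fintype.card_fin, Fintype.card_fin,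
    Fintype.card_fin, Fintype.card_fin] at hcard
  -- hcard : B ^ (k + 1) ≤ (K * B + 1) ^ k
  have hfin : (K * B + 1) ^ k ≤ (K + 1) ^ k * B ^ k := by
    rw [← mul_pow]
    apply Nat.pow_le_pow_left
    have : (K + 1) * B = K * B + B := by ring
    omega
  have hBk : 0 < B ^ k := Nat.pow_pos (by omega)
  have hsplit : B ^ (k + 1) = B * B ^ k := by rw [pow_succ]; ring
  have hle : B ≤ (K + 1) ^ k := by
    have h1 : B * B ^ k ≤ (K + 1) ^ k * B ^ k := by
      rw [← hsplit]
      exact hcard.trans hfin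
    exact Nat.le_of_mul_le_mul_right h1 hBk
  omega
end
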